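/- Let n ≥ 2 be an integer, let A and B be Boolean algebras, and let H ⊆ A and K ⊆ B be n-independent. Then the set {(h, 0) : h ∈ H} ∪ {(0, k) : k ∈ K} is n-independent in the product Boolean algebra A × B. -/

import Mathlib

universe u v

/-- `X` is `n`-independent: `⊥ ∉ X`, (⊥1) no nonempty finite `F ⊆ X` has `sup F = ⊤`,
(⊥2ₙ) any nonempty finite `F ⊆ X` with `inf F = ⊥` has a subset of size `≤ n` with
infimum `⊥`, and (⊥3) if `⊥ ≠ inf F ≤ sup G` then `F ∩ G ≠ ∅`. -/
def NIndependent {α : Type u} [BooleanAlgebra α] (n : ℕ) (X : Set α) : Prop :=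
  ⊥ ∉ X ∧
  (∀ F : Finset α, ↑F ⊆ X → F.Nonempty → F.sup id ≠ ⊤) ∧
  (∀ F : Finset α, ↑F ⊆ X → F.Nonempty → F.inf id = ⊥ →
    ∃ F' ⊆ F, F'.card ≤ n ∧ F'.inf id = ⊥) ∧
  (∀ F G : Finset α, ↑F ⊆ X → ↑G ⊆ X → F.Nonempty → G.Nonempty →
    F.inf id ≠ ⊥ → F.inf id ≤ G.sup id → ((F : Set α) ∩ (G : Set α)).Nonempty)

section Aux

variable {α : Type u} {β : Type v} [BooleanAlgebra α] [BooleanAlgebra β]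

private lemma prod_fst_sup (F : Finset (α × β)) : (F.sup id).1 = F.sup Prod.fst := by
  induction F using Finset.cons_induction with
  | empty => rfl
  | cons a s h ih => simp [Finset.sup_cons, ih]

private lemma prod_snd_sup (F : Finset (α × β)) : (F.sup id).2 = F.sup Prod.snd := by
  induction F using Finset.cons_induction with
  | empty => rfl
  | cons a s h ih => simp [Finset.sup_cons, ih]

private lemma prod_fst_inf (F : Finset (α × β)) : (F.inf id).1 = F.inf Prod.fst := by
  induction F using Finset.cons_induction with
  | empty => rfl
  | cons a s h ih => simp [Finset.inf_cons, ih]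

private lemma prod_snd_inf (F : Finset (α × β)) : (F.inf id).2 = F.inf Prod.snd := by
  induction F using Finset.cons_induction with
  | empty => rfl
  | cons a s h ih => simp [Finset.inf_cons, ih]

private lemma prod_eq_bot_iff (p : α × β) : p = ⊥ ↔ p.1 = ⊥ ∧ p.2 = ⊥ := by
  simp [Prod.ext_iff, Prod.fst_bot, Prod.snd_bot]

private lemma prod_eq_top_iff (p : α × β) : p = ⊤ ↔ p.1 = ⊤ ∧ p.2 = ⊤ := by
  simp [Prod.ext_iff, Prod.fst_top, Prod.snd_top]

end Aux

/-- For `n ≥ 2`, if `H ⊆ A` and `K ⊆ B` are `n`-independent, then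
`(H × {⊥}) ∪ ({⊥} × K)` is `n`-independent in the product Boolean algebra `A × B`. -/
theorem nIndependent_prod {α : Type u} {β : Type v} [BooleanAlgebra α] [BooleanAlgebra β]
    (n : ℕ) (hn : 2 ≤ n) (H : Set α) (K : Set β)
    (hH : NIndependent n H) (hK : NIndependent n K) :
    NIndependent n
      ((fun h => (h, (⊥ : β))) '' H ∪ (fun k => ((⊥ : α), k)) '' K) := by
  classical
  obtain ⟨hH0, hH1, hH2, hH3⟩ := hH
  obtain ⟨hK0, hK1, hK2, hK3⟩ := hK
  set X : Set (α × β) := (fun h => (h, (⊥ : β))) '' H ∪ (fun k => ((⊥ : α), k)) '' K with hXdef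
  have hX : ∀ x : α × β, x ∈ X → (x.1 ∈ H ∧ x.2 = ⊥) ∨ (x.1 = ⊥ ∧ x.2 ∈ K) := by
    rintro x (⟨h, hh, rfl⟩ | ⟨k, hk, rfl⟩)
    · exact Or.inl ⟨hh, rfl⟩
    · exact Or.inr ⟨rfl, hk⟩
  refine ⟨?_, ?_, ?_, ?_⟩
  · -- ⊥ ∉ X
    intro hbot
    rcases hX ⊥ hbot with ⟨h1, _⟩ | ⟨_, h2⟩
    · exact hH0 h1
    · exact hK0 h2
  · -- (⊥1)
    intro F hF hFne htop
    have h1 : F.sup Prod.fst = ⊤ := by rw [← prod_fst_sup, htop]; rfl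
    have h2 : F.sup Prod.snd = ⊤ := by rw [← prod_snd_sup, htop]; rfl
    set FA := (F.filter (fun x => x.2 = (⊥ : β))).image Prod.fst with hFAdef
    set FB := (F.filter (fun x => x.1 = (⊥ : α))).image Prod.snd with hFBdef
    have hFAH : ↑FA ⊆ H := by
      intro a ha
      simp only [hFAdef, Finset.coe_image, Set.mem_image, Finset.mem_coe,
        Finset.mem_filter] at ha
      obtain ⟨x, ⟨hxF, hx2⟩, rfl⟩ := ha
      rcases hX x (hF hxF) with ⟨ha1, _⟩ | ⟨_, ha2⟩
      · exact ha1
      · exact absurd (hx2 ▸ ha2) hK0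
    have hFBK : ↑FB ⊆ K := by
      intro b hb
      simp only [hFBdef, Finset.coe_image, Set.mem_image, Finset.mem_coe,
        Finset.mem_filter] at hb
      obtain ⟨x, ⟨hxF, hx1⟩, rfl⟩ := hb
      rcases hX x (hF hxF) with ⟨ha1, _⟩ | ⟨_, ha2⟩
      · exact absurd (hx1 ▸ ha1) hH0
      · exact ha2
    have hsupA : F.sup Prod.fst ≤ FA.sup id := by
      apply Finset.sup_le
      intro x hx
      rcases hX x (hF hx) with ⟨_, hx2⟩ | ⟨hx1, _⟩
      · exact Finset.le_sup (f := id)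
          (Finset.mem_image_of_mem Prod.fst (Finset.mem_filter.mpr ⟨hx, hx2⟩))
      · rw [hx1]; exact bot_le
    have hsupB : F.sup Prod.snd ≤ FB.sup id := by
      apply Finset.sup_le
      intro x hx
      rcases hX x (hF hx) with ⟨_, hx2⟩ | ⟨hx1, _⟩
      · rw [hx2]; exact bot_le
      · exact Finset.le_sup (f := id)
          (Finset.mem_image_of_mem Prod.snd (Finset.mem_filter.mpr ⟨hx, hx1⟩))
    by_cases hA : FA.Nonempty
    · exact hH1 FA hFAH hA (top_le_iff.mp (h1 ▸ hsupA))
    · obtain ⟨x, hx⟩ := hFne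
      have hxK : x.1 = ⊥ ∧ x.2 ∈ K := by
        rcases hX x (hF hx) with ⟨_, hx2⟩ | h'
        · exact absurd ⟨x.1,
            Finset.mem_image_of_mem Prod.fst (Finset.mem_filter.mpr ⟨hx, hx2⟩)⟩ hA
        · exact h'
      have hB : x.2 ∈ FB :=
        Finset.mem_image_of_mem Prod.snd (Finset.mem_filter.mpr ⟨hx, hxK.1⟩)
      exact hK1 FB hFBK ⟨x.2, hB⟩ (top_le_iff.mp (h2 ▸ hsupB))
  · -- (⊥2ₙ)
    intro F hF hFne hinf
    have hi1 : F.inf Prod.fst = ⊥ := by rw [← prod_fst_inf, hinf]; rfl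
    have hi2 : F.inf Prod.snd = ⊥ := by rw [← prod_snd_inf, hinf]; rfl
    by_cases hx : ∃ x ∈ F, x.1 = (⊥ : α)
    · by_cases hy : ∃ y ∈ F, y.2 = (⊥ : β)
      · obtain ⟨x, hxF, hx1⟩ := hx
        obtain ⟨y, hyF, hy2⟩ := hy
        refine ⟨{x, y}, ?_, ?_, ?_⟩
        · exact Finset.insert_subset_iff.mpr ⟨hxF, Finset.singleton_subset_iff.mpr hyF⟩
        · exact le_trans (Finset.card_insert_le _ _) (by simpa using hn)
        · rw [Finset.inf_insert, Finset.inf_singleton]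
          rw [prod_eq_bot_iff]
          constructor
          · show x.1 ⊓ y.1 = ⊥
            rw [hx1, bot_inf_eq]
          · show x.2 ⊓ y.2 = ⊥
            rw [hy2, inf_bot_eq]
      · -- no element has second coordinate ⊥ : all elements are of the form (⊥, k)
        have hall : ∀ x ∈ F, x.1 = ⊥ ∧ x.2 ∈ K := by
          intro x hxF
          rcases hX x (hF hxF) with h' | h'
          · exact absurd ⟨x, hxF, h'.2⟩ hy
          · exact h'
        set FB := F.image Prod.snd with hFBdef
        have hFBK : ↑FB ⊆ K := by
          intro b hb
          simp only [hFBdef, Finset.coe_image, Set.mem_image, Finset.mem_coe] at hb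
          obtain ⟨z, hzF, rfl⟩ := hb
          exact (hall z hzF).2
        have hFBne : FB.Nonempty := hFne.image _
        have hFBinf : FB.inf id = ⊥ := by
          rw [hFBdef, Finset.inf_image]
          simpa using hi2
        obtain ⟨B', hB'sub, hB'card, hB'inf⟩ := hK2 FB hFBK hFBne hFBinf
        have hB'ne : B'.Nonempty := by
          rcases B'.eq_empty_or_nonempty with rfl | h
          · exfalso
            rw [Finset.inf_empty] at hB'inf
            obtain ⟨b, hbFB⟩ := hFBne
            have hbK := hFBK hbFB
            have : b = ⊥ := le_bot_iff.mp (hB'inf ▸ le_top)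
            exact hK0 (this ▸ hbK)
          · exact h
        refine ⟨B'.image (fun b => ((⊥ : α), b)), ?_, ?_, ?_⟩
        · intro z hz
          simp only [Finset.mem_image] at hz
          obtain ⟨b, hbB', rfl⟩ := hz
          have hbFB := hB'sub hbB'
          simp only [hFBdef, Finset.mem_image] at hbFB
          obtain ⟨w, hwF, hw2⟩ := hbFB
          have hw : w = (⊥, b) := Prod.ext (hall w hwF).1 hw2
          exact hw ▸ hwF
        · exact le_trans Finset.card_image_le hB'card
        · rw [prod_eq_bot_iff]
          constructor
          · rw [prod_fst_inf, Finset.inf_image]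
            exact Finset.inf_const hB'ne _
          · rw [prod_snd_inf, Finset.inf_image]
            simpa using hB'inf
    · -- no element has first coordinate ⊥ : all elements are of the form (h, ⊥)
      have hall : ∀ x ∈ F, x.1 ∈ H ∧ x.2 = ⊥ := by
        intro x hxF
        rcases hX x (hF hxF) with h' | h'
        · exact h'
        · exact absurd ⟨x, hxF, h'.1⟩ hx
      set FA := F.image Prod.fst with hFAdef
      have hFAH : ↑FA ⊆ H := by
        intro a ha
        simp only [hFAdef, Finset.coe_image, Set.mem_image, Finset.mem_coe] at ha
        obtain ⟨z, hzF, rfl⟩ := ha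
        exact (hall z hzF).1
      have hFAne : FA.Nonempty := hFne.image _
      have hFAinf : FA.inf id = ⊥ := by
        rw [hFAdef, Finset.inf_image]
        simpa using hi1
      obtain ⟨A', hA'sub, hA'card, hA'inf⟩ := hH2 FA hFAH hFAne hFAinf
      have hA'ne : A'.Nonempty := by
        rcases A'.eq_empty_or_nonempty with rfl | h
        · exfalso
          rw [Finset.inf_empty] at hA'inf
          obtain ⟨a, haFA⟩ := hFAne
          have haH := hFAH haFA
          have : a = ⊥ := le_bot_iff.mp (hA'inf ▸ le_top)
          exact hH0 (this ▸ haH)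
        · exact h
      refine ⟨A'.image (fun a => (a, (⊥ : β))), ?_, ?_, ?_⟩
      · intro z hz
        simp only [Finset.mem_image] at hz
        obtain ⟨a, haA', rfl⟩ := hz
        have haFA := hA'sub haA'
        simp only [hFAdef, Finset.mem_image] at haFA
        obtain ⟨w, hwF, hw1⟩ := haFA
        have hw : w = (a, ⊥) := Prod.ext hw1 (hall w hwF).2
        exact hw ▸ hwF
      · exact le_trans Finset.card_image_le hA'card
      · rw [prod_eq_bot_iff]
        constructor
        · rw [prod_fst_inf, Finset.inf_image]
          exact hA'inf
        · rw [prod_snd_inf, Finset.inf_image]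
          exact Finset.inf_const hA'ne _
  · -- (⊥3)
    intro F G hF hG hFne hGne hFinf hle
    have hle1 : F.inf Prod.fst ≤ G.sup Prod.fst := by
      rw [← prod_fst_inf, ← prod_fst_sup]; exact hle.1
    have hle2 : F.inf Prod.snd ≤ G.sup Prod.snd := by
      rw [← prod_snd_inf, ← prod_snd_sup]; exact hle.2
    -- F must be of pure type
    by_cases hx : ∃ x ∈ F, x.1 = (⊥ : α)
    · -- then no element of F has second coordinate ⊥, i.e. F is pure K-type
      have hy : ∀ y ∈ F, y.2 ≠ (⊥ : β) := by
        intro y hyF hy2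
        apply hFinf
        obtain ⟨x, hxF, hx1⟩ := hx
        rw [prod_eq_bot_iff]
        constructor
        · rw [prod_fst_inf]
          exact le_bot_iff.mp (hx1 ▸ Finset.inf_le hxF)
        · rw [prod_snd_inf]
          exact le_bot_iff.mp (hy2 ▸ Finset.inf_le hyF)
      have hall : ∀ x ∈ F, x.1 = ⊥ ∧ x.2 ∈ K := by
        intro x hxF
        rcases hX x (hF hxF) with h' | h'
        · exact absurd h'.2 (hy x hxF)
        · exact h'
      set FB := F.image Prod.snd with hFBdef
      have hFBK : ↑FB ⊆ K := by
        intro b hb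
        simp only [hFBdef, Finset.coe_image, Set.mem_image, Finset.mem_coe] at hb
        obtain ⟨z, hzF, rfl⟩ := hb
        exact (hall z hzF).2
      have hFBne : FB.Nonempty := hFne.image _
      have hFBinf : FB.inf id ≠ ⊥ := by
        intro h
        apply hFinf
        rw [prod_eq_bot_iff]
        refine ⟨?_, ?_⟩
        · rw [prod_fst_inf]
          obtain ⟨x, hxF⟩ := hFne
          exact le_bot_iff.mp ((hall x hxF).1 ▸ Finset.inf_le hxF)
        · rw [prod_snd_inf]
          rw [hFBdef, Finset.inf_image] at h
          simpa using h
      set GB := (G.filter (fun x => x.1 = (⊥ : α))).image Prod.snd with hGBdef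
      have hGBK : ↑GB ⊆ K := by
        intro b hb
        simp only [hGBdef, Finset.coe_image, Set.mem_image, Finset.mem_coe,
          Finset.mem_filter] at hb
        obtain ⟨z, ⟨hzG, hz1⟩, rfl⟩ := hb
        rcases hX z (hG hzG) with ⟨hz1', _⟩ | ⟨_, hz2'⟩
        · exact absurd (hz1 ▸ hz1') hH0
        · exact hz2'
      have hsupGB : G.sup Prod.snd ≤ GB.sup id := by
        apply Finset.sup_le
        intro z hz
        rcases hX z (hG hz) with ⟨_, hz2⟩ | ⟨hz1, _⟩
        · rw [hz2]; exact bot_le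
        · exact Finset.le_sup (f := id)
            (Finset.mem_image_of_mem Prod.snd (Finset.mem_filter.mpr ⟨hz, hz1⟩))
      have hFBle : FB.inf id ≤ GB.sup id := by
        refine le_trans ?_ (le_trans hle2 hsupGB)
        rw [hFBdef, Finset.inf_image]
        simp
      have hGBne : GB.Nonempty := by
        rcases GB.eq_empty_or_nonempty with h | h
        · exfalso
          apply hFBinf
          rw [h, Finset.sup_empty] at hFBle
          exact le_bot_iff.mp hFBle
        · exact h
      obtain ⟨b, hbFB, hbGB⟩ := hK3 FB GB hFBK hGBK hFBne hGBne hFBinf hFBle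
      simp only [hFBdef, Finset.coe_image, Set.mem_image, Finset.mem_coe] at hbFB
      obtain ⟨z, hzF, rfl⟩ := hbFB
      simp only [hGBdef, Finset.coe_image, Set.mem_image, Finset.mem_coe,
        Finset.mem_filter] at hbGB
      obtain ⟨w, ⟨hwG, hw1⟩, hw2⟩ := hbGB
      have hzw : w = z := Prod.ext (hw1.trans (hall z hzF).1.symm) hw2
      exact ⟨z, hzF, hzw ▸ hwG⟩
    · -- F is pure H-type
      have hall : ∀ x ∈ F, x.1 ∈ H ∧ x.2 = ⊥ := by
        intro x hxF
        rcases hX x (hF hxF) with h' | h'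
        · exact h'
        · exact absurd ⟨x, hxF, h'.1⟩ hx
      set FA := F.image Prod.fst with hFAdef
      have hFAH : ↑FA ⊆ H := by
        intro a ha
        simp only [hFAdef, Finset.coe_image, Set.mem_image, Finset.mem_coe] at ha
        obtain ⟨z, hzF, rfl⟩ := ha
        exact (hall z hzF).1
      have hFAne : FA.Nonempty := hFne.image _
      have hFAinf : FA.inf id ≠ ⊥ := by
        intro h
        apply hFinf
        rw [prod_eq_bot_iff]
        refine ⟨?_, ?_⟩
        · rw [prod_fst_inf]
          rw [hFAdef, Finset.inf_image] at h
          simpa using h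
        · rw [prod_snd_inf]
          obtain ⟨x, hxF⟩ := hFne
          exact le_bot_iff.mp ((hall x hxF).2 ▸ Finset.inf_le hxF)
      set GA := (G.filter (fun x => x.2 = (⊥ : β))).image Prod.fst with hGAdef
      have hGAH : ↑GA ⊆ H := by
        intro a ha
        simp only [hGAdef, Finset.coe_image, Set.mem_image, Finset.mem_coe,
          Finset.mem_filter] at ha
        obtain ⟨z, ⟨hzG, hz2⟩, rfl⟩ := ha
        rcases hX z (hG hzG) with ⟨hz1', _⟩ | ⟨_, hz2'⟩
        · exact hz1'
        · exact absurd (hz2 ▸ hz2') hK0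
      have hsupGA : G.sup Prod.fst ≤ GA.sup id := by
        apply Finset.sup_le
        intro z hz
        rcases hX z (hG hz) with ⟨_, hz2⟩ | ⟨hz1, _⟩
        · exact Finset.le_sup (f := id)
            (Finset.mem_image_of_mem Prod.fst (Finset.mem_filter.mpr ⟨hz, hz2⟩))
        · rw [hz1]; exact bot_le
      have hFAle : FA.inf id ≤ GA.sup id := by
        refine le_trans ?_ (le_trans hle1 hsupGA)
        rw [hFAdef, Finset.inf_image]
        simp
      have hGAne : GA.Nonempty := by
        rcases GA.eq_empty_or_nonempty with h | h
        · exfalso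
          apply hFAinf
          rw [h, Finset.sup_empty] at hFAle
          exact le_bot_iff.mp hFAle
        · exact h
      obtain ⟨a, haFA, haGA⟩ := hH3 FA GA hFAH hGAH hFAne hGAne hFAinf hFAle
      simp only [hFAdef, Finset.coe_image, Set.mem_image, Finset.mem_coe] at haFA
      obtain ⟨z, hzF, rfl⟩ := haFA
      simp only [hGAdef, Finset.coe_image, Set.mem_image, Finset.mem_coe,
        Finset.mem_filter] at haGA
      obtain ⟨w, ⟨hwG, hw2⟩, hw1⟩ := haGA
      have hzw : w = z := Prod.ext hw1 (hw2.trans (hall z hzF).2.symm)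
      exact ⟨z, hzF, hzw ▸ hwG⟩
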